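/- arXiv:1911.12344 — 7 statements merged into one kernel-verified Lean document; each statement's English description precedes it below -/
import Mathlib

section
/- Let X be a set, K : X × X → ℂ a positive definite kernel with reproducing kernel Hilbert space H(K), let (B, F_B, μ) be a sigma-finite measure space, (k_x)_{x∈X} a family in L²(B,μ), and set K^{(μ)}(x,y) := ⟨k_x, k_y⟩_{L²(μ)}. If K^{(μ)} ≪ K, then for every φ ∈ L²(B,μ) the function S_Bφ : X → ℂ defined by (S_Bφ)(x) := ⟨k_x, φ⟩_{L²(μ)} = ∫_B conj(k_x(b))·φ(b) dμ(b) belongs to H(K) and satisfies ‖S_Bφ‖_{H(K)} ≤ ‖φ‖_{L²(μ)}. -/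
open MeasureTheory
open scoped ComplexInnerProductSpace ComplexOrder

noncomputable section

/-- The quadratic form `∑ᵢ∑ⱼ conj(cᵢ)·cⱼ·K(xᵢ,xⱼ)` attached to a kernel `K`. -/
def pdSum {X : Type*} (K : X → X → ℂ) {N : ℕ} (x : Fin N → X) (c : Fin N → ℂ) : ℂ :=
  ∑ i, ∑ j, (starRingEnd ℂ) (c i) * c j * K (x i) (x j)

/-- `K` is a positive definite kernel. -/
def IsPosDefKernel {X : Type*} (K : X → X → ℂ) : Prop :=
  ∀ (N : ℕ) (x : Fin N → X) (c : Fin N → ℂ), 0 ≤ pdSum K x c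

/-- The order `K ≪ L` on kernels. -/
def KernelLE {X : Type*} (K L : X → X → ℂ) : Prop :=
  ∀ (N : ℕ) (x : Fin N → X) (c : Fin N → ℂ), pdSum K x c ≤ pdSum L x c

lemma pdSum_inner {X : Type*} {E : Type*} [NormedAddCommGroup E] [InnerProductSpace ℂ E]
    (u : X → E) {N : ℕ} (x : Fin N → X) (c : Fin N → ℂ) :
    pdSum (fun a b => ⟪u a, u b⟫) x c = ⟪∑ i, c i • u (x i), ∑ i, c i • u (x i)⟫ := by
  simp only [pdSum, inner_sum, sum_inner, inner_smul_left, inner_smul_right, Finset.mul_sum]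
  rw [Finset.sum_comm]
  exact Finset.sum_congr rfl fun j _ => Finset.sum_congr rfl fun i _ => by ring

lemma finsupp_sum_eq {X : Type*} (d : X →₀ ℂ) {E : Type*} [AddCommMonoid E] [Module ℂ E]
    (u : X → E) :
    (d.sum fun x a => a • u x)
      = ∑ i : Fin d.support.card,
          d ((d.support.equivFin.symm i : X)) • u ((d.support.equivFin.symm i : X)) := by
  rw [Finsupp.sum, ← Finset.sum_coe_sort]
  exact Fintype.sum_equiv d.support.equivFin.symm
    (fun i => d ((d.support.equivFin.symm i : X)) • u ((d.support.equivFin.symm i : X)))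
    (fun a : d.support => d (a : X) • u (a : X)) (fun i => rfl) |>.symm

theorem stmt_3 {X : Type*} (K : X → X → ℂ) (hK : IsPosDefKernel K)
    {H : Type*} [NormedAddCommGroup H] [InnerProductSpace ℂ H] [CompleteSpace H]
    (ι : H →ₗ[ℂ] (X → ℂ)) (hι : Function.Injective ι)
    (kH : X → H) (hkH : ∀ x, ι (kH x) = fun y => K y x)
    (hrep : ∀ (g : H) (x : X), ι g x = ⟪kH x, g⟫)
    {B : Type*} [MeasurableSpace B] (μ : Measure B) [SigmaFinite μ]
    (k : X → Lp ℂ 2 μ)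
    (hord : KernelLE (fun x y => ⟪k x, k y⟫) K) :
    ∀ φ : Lp ℂ 2 μ, ∃ g : H,
      ι g = (fun x => ⟪k x, φ⟫) ∧ ‖g‖ ≤ ‖φ‖ := by
  intro φ
  have hKinner : ∀ a b, K a b = ⟪kH a, kH b⟫ := by
    intro a b
    rw [← hrep (kH b) a, hkH b]
  set p : X → H × ℂ := fun x => (kH x, ⟪φ, k x⟫) with hp
  set G : Submodule ℂ (H × ℂ) := Submodule.span ℂ (Set.range p) with hGdef
  -- key bound
  have key : ∀ v c, (v, c) ∈ G → ‖c‖ ≤ ‖φ‖ * ‖v‖ := by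
    intro v c hvc
    obtain ⟨d, hd⟩ := (Finsupp.mem_span_range_iff_exists_finsupp).1 hvc
    set N := d.support.card with hN
    set xs : Fin N → X := fun i => (d.support.equivFin.symm i : X) with hxs
    set cs : Fin N → ℂ := fun i => d (xs i) with hcs
    have hd' : (∑ i, cs i • p (xs i)) = (v, c) := by
      rw [← finsupp_sum_eq d p]; exact hd
    have hv : (∑ i, cs i • kH (xs i)) = v := by
      have := congrArg Prod.fst hd'
      simpa [hp, Prod.fst_sum] using this
    have hc : (∑ i, cs i • ⟪φ, k (xs i)⟫) = c := by
      have := congrArg Prod.snd hd'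
      simpa [hp, Prod.snd_sum] using this
    have hc' : c = ⟪φ, ∑ i, cs i • k (xs i)⟫ := by
      rw [← hc]; simp [inner_sum, inner_smul_right]
    -- norm comparison from hord
    have h := hord N xs cs
    rw [pdSum_inner k xs cs] at h
    have hR : pdSum K xs cs = pdSum (fun a b => ⟪kH a, kH b⟫) xs cs := by
      unfold pdSum; congr 1; ext i; congr 1; ext j; rw [hKinner]
    rw [hR, pdSum_inner kH xs cs] at h
    have h2 : ‖∑ i, cs i • k (xs i)‖ ^ 2 ≤ ‖∑ i, cs i • kH (xs i)‖ ^ 2 := by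
      have h1 := (Complex.le_def.1 h).1
      rw [← inner_self_eq_norm_sq (𝕜 := ℂ), ← inner_self_eq_norm_sq (𝕜 := ℂ)]
      simpa using h1
    have h3 : ‖∑ i, cs i • k (xs i)‖ ≤ ‖∑ i, cs i • kH (xs i)‖ :=
      le_of_pow_le_pow_left₀ two_ne_zero (norm_nonneg _) h2
    calc ‖c‖ = ‖⟪φ, ∑ i, cs i • k (xs i)⟫‖ := by rw [hc']
      _ ≤ ‖φ‖ * ‖∑ i, cs i • k (xs i)‖ := norm_inner_le_norm _ _
      _ ≤ ‖φ‖ * ‖∑ i, cs i • kH (xs i)‖ := by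
          exact mul_le_mul_of_nonneg_left h3 (norm_nonneg _)
      _ = ‖φ‖ * ‖v‖ := by rw [hv]
  have huniq : ∀ v c c', (v, c) ∈ G → (v, c') ∈ G → c = c' := by
    intro v c c' h1 h2
    have h3 : ((0 : H), c - c') ∈ G := by
      have := G.sub_mem h1 h2
      simpa using this
    have := key 0 (c - c') h3
    simp only [norm_zero, mul_zero] at this
    have : ‖c - c'‖ = 0 := le_antisymm this (norm_nonneg _)
    rwa [norm_eq_zero, sub_eq_zero] at this
  set V : Submodule ℂ H := G.map (LinearMap.fst ℂ H ℂ) with hVdef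
  have hmem : ∀ v : V, ∃ c, ((v : H), c) ∈ G := by
    rintro ⟨v, hv⟩
    obtain ⟨⟨a, c⟩, hac, h⟩ := Submodule.mem_map.1 hv
    exact ⟨c, by simpa [← h] using hac⟩
  choose f hf using hmem
  have hadd : ∀ v w : V, f (v + w) = f v + f w := by
    intro v w
    refine huniq ((v : H) + (w : H)) (f (v + w)) (f v + f w) (by simpa using hf (v + w)) ?_
    have := G.add_mem (hf v) (hf w)
    simpa [Prod.mk_add_mk] using this
  have hsmul : ∀ (a : ℂ) (v : V), f (a • v) = a • f v := by
    intro a v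
    refine huniq (a • (v : H)) (f (a • v)) (a • f v) (by simpa using hf (a • v)) ?_
    have := G.smul_mem a (hf v)
    simpa [Prod.smul_mk] using this
  set flin : V →ₗ[ℂ] ℂ := { toFun := f, map_add' := hadd, map_smul' := hsmul } with hflin
  have hbound : ∀ v : V, ‖flin v‖ ≤ ‖φ‖ * ‖v‖ := by
    intro v
    exact key (v : H) (f v) (hf v)
  set F₀ : V →L[ℂ] ℂ := flin.mkContinuous ‖φ‖ hbound with hF₀
  have hF₀norm : ‖F₀‖ ≤ ‖φ‖ := flin.mkContinuous_norm_le (norm_nonneg φ) hbound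
  obtain ⟨F, hFext, hFnorm⟩ := exists_extension_norm_eq V F₀
  set g : H := (InnerProductSpace.toDual ℂ H).symm F with hg
  have hgF : ∀ w : H, ⟪g, w⟫ = F w := by
    intro w
    rw [hg, InnerProductSpace.toDual_symm_apply]
  have hkHmem : ∀ x, kH x ∈ V := by
    intro x
    exact ⟨p x, Submodule.subset_span (Set.mem_range_self x), rfl⟩
  have hval : ∀ x : X, F (kH x) = ⟪φ, k x⟫ := by
    intro x
    have h1 : F (kH x) = F₀ ⟨kH x, hkHmem x⟩ := (hFext ⟨kH x, hkHmem x⟩)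
    rw [h1]
    have h2 : F₀ ⟨kH x, hkHmem x⟩ = f ⟨kH x, hkHmem x⟩ := rfl
    rw [h2]
    refine huniq (kH x) _ _ (hf ⟨kH x, hkHmem x⟩) ?_
    exact Submodule.subset_span (Set.mem_range_self x)
  refine ⟨g, ?_, ?_⟩
  · funext x
    rw [hrep g x, ← inner_conj_symm, hgF, hval, inner_conj_symm]
  · calc ‖g‖ = ‖F‖ := (InnerProductSpace.toDual ℂ H).symm.norm_map F
      _ = ‖F₀‖ := hFnorm
      _ ≤ ‖φ‖ := hF₀norm
end
end

section
/- Let X be a set, K : X × X → ℂ a positive definite kernel with reproducing kernel Hilbert space H(K), let (B, F_B, μ) be a sigma-finite measure space, (k_x)_{x∈X} a family in L²(B,μ), and set K^{(μ)}(x,y) := ⟨k_x, k_y⟩_{L²(μ)}. Suppose that for every φ ∈ L²(B,μ) the function x ↦ ⟨k_x, φ⟩_{L²(μ)} belongs to H(K) with H(K)-norm at most ‖φ‖_{L²(μ)}. Then K^{(μ)} ≪ K, i.e., for every finite family x₁,…,x_N ∈ X and scalars c₁,…,c_N ∈ ℂ, Σ_{i,j} conj(cᵢ)·cⱼ·K^{(μ)}(xᵢ,xⱼ)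 ≤ Σ_{i,j} conj(cᵢ)·cⱼ·K(xᵢ,xⱼ). -/
open MeasureTheory
open scoped ComplexInnerProductSpace ComplexOrder

noncomputable section

lemma quadSum {E : Type*} [NormedAddCommGroup E] [InnerProductSpace ℂ E] {N : ℕ}
    (c : Fin N → ℂ) (w : Fin N → E) :
    ⟪∑ i, c i • w i, ∑ j, c j • w j⟫ =
      ∑ i, ∑ j, (starRingEnd ℂ) (c i) * c j * ⟪w i, w j⟫ := by
  rw [sum_inner]
  refine Finset.sum_congr rfl fun i _ => ?_
  rw [inner_sum]
  refine Finset.sum_congr rfl fun j _ => ?_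
  rw [inner_smul_left, inner_smul_right]; ring

theorem stmt_4 {X : Type*} (K : X → X → ℂ) (hK : IsPosDefKernel K)
    {H : Type*} [NormedAddCommGroup H] [InnerProductSpace ℂ H] [CompleteSpace H]
    (ι : H →ₗ[ℂ] (X → ℂ)) (hι : Function.Injective ι)
    (kH : X → H) (hkH : ∀ x, ι (kH x) = fun y => K y x)
    (hrep : ∀ (g : H) (x : X), ι g x = ⟪kH x, g⟫)
    {B : Type*} [MeasurableSpace B] (μ : Measure B) [SigmaFinite μ]
    (k : X → Lp ℂ 2 μ)
    (hS : ∀ φ : Lp ℂ 2 μ, ∃ g : H,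
      ι g = (fun x => ⟪k x, φ⟫) ∧ ‖g‖ ≤ ‖φ‖) :
    KernelLE (fun x y => ⟪k x, k y⟫) K := by
  intro N x c
  set u : Lp ℂ 2 μ := ∑ i, c i • k (x i) with hu
  set v : H := ∑ i, c i • kH (x i) with hv
  have hL : pdSum (fun x y => ⟪k x, k y⟫) x c = ⟪u, u⟫ := by
    rw [hu, quadSum]; rfl
  have hKinner : ∀ i j, K (x i) (x j) = ⟪kH (x i), kH (x j)⟫ := by
    intro i j
    have := congrFun (hkH (x j)) (x i)
    rw [hrep (kH (x j)) (x i)] at this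
    exact this.symm
  have hR : pdSum K x c = ⟪v, v⟫ := by
    rw [hv, quadSum]
    exact Finset.sum_congr rfl fun i _ => Finset.sum_congr rfl fun j _ => by
      rw [hKinner i j]
  obtain ⟨g, hg1, hg2⟩ := hS u
  have hvg : ⟪v, g⟫ = ⟪u, u⟫ := by
    have heq : ∀ i, ⟪kH (x i), g⟫ = ⟪k (x i), u⟫ := by
      intro i
      rw [← hrep g (x i), hg1]
    have h5 : ⟪v, g⟫ = ∑ i, (starRingEnd ℂ) (c i) * ⟪k (x i), u⟫ := by
      rw [hv, sum_inner]
      exact Finset.sum_congr rfl fun i _ => by rw [inner_smul_left, heq]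
    have h4 : ⟪u, u⟫ = ∑ i, (starRingEnd ℂ) (c i) * ⟪k (x i), u⟫ := by
      conv_lhs => rw [hu, sum_inner]
      exact Finset.sum_congr rfl fun i _ => inner_smul_left _ _ _
    exact h5.trans h4.symm
  have hnu : (0:ℝ) ≤ ‖u‖ := norm_nonneg u
  have hnv : (0:ℝ) ≤ ‖v‖ := norm_nonneg v
  have key : ‖u‖ ^ 2 ≤ ‖v‖ * ‖u‖ := by
    have h1 : RCLike.re (⟪v, g⟫ : ℂ) = ‖u‖ ^ 2 := by
      rw [hvg]; exact inner_self_eq_norm_sq u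
    have h2 : RCLike.re (⟪v, g⟫ : ℂ) ≤ ‖v‖ * ‖g‖ := re_inner_le_norm v g
    have h3 : ‖v‖ * ‖g‖ ≤ ‖v‖ * ‖u‖ := mul_le_mul_of_nonneg_left hg2 hnv
    linarith
  have key2 : ‖u‖ ^ 2 ≤ ‖v‖ ^ 2 := by nlinarith
  rw [hL, hR, @inner_self_eq_norm_sq_to_K ℂ, @inner_self_eq_norm_sq_to_K ℂ]
  exact_mod_cast Complex.real_le_real.mpr key2
end
end

section
/- Let (V, E, c) be a connected, locally finite resistance network. Then for every pair of vertices x, y ∈ V there exists a constant C_{x,y} ≥ 0 such that for every function f : V → ℂ of finite energy, |f(x) − f(y)|² ≤ C_{x,y} · ‖f‖²_E. -/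
noncomputable section

/-- The summand `c_{xy}·|f(x) − f(y)|²` over the set of (ordered) edges; the
energy of `f` is `(1/2)·∑'` of this. -/
def edgeEnergySummand {V : Type*} (E : V → V → Prop) (c : V → V → ℝ) (f : V → ℂ)
    (p : {p : V × V // E p.1 p.2}) : ℝ :=
  c p.1.1 p.1.2 * ‖f p.1.1 - f p.1.2‖ ^ 2

lemma edgeEnergySummand_nonneg {V : Type*} (E : V → V → Prop) (c : V → V → ℝ)
    (hc_pos : ∀ x y, E x y → 0 < c x y) (f : V → ℂ) (p : {p : V × V // E p.1 p.2}) :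
    0 ≤ edgeEnergySummand E c f p :=
  mul_nonneg (hc_pos _ _ p.2).le (sq_nonneg _)

lemma edge_bound {V : Type*} (E : V → V → Prop) (c : V → V → ℝ)
    (hE_symm : ∀ x y, E x y → E y x) (hE_irrefl : ∀ x, ¬ E x x)
    (hc_symm : ∀ x y, c x y = c y x) (hc_pos : ∀ x y, E x y → 0 < c x y)
    {a b : V} (hab : E a b) (f : V → ℂ) (hf : Summable (edgeEnergySummand E c f)) :
    c a b * ‖f a - f b‖ ^ 2 ≤ (1 / 2) * ∑' p, edgeEnergySummand E c f p := by
  classical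
  have hne : a ≠ b := fun h => hE_irrefl a (h ▸ hab)
  set p1 : {p : V × V // E p.1 p.2} := ⟨(a, b), hab⟩
  set p2 : {p : V × V // E p.1 p.2} := ⟨(b, a), hE_symm a b hab⟩
  have hp12 : p1 ≠ p2 := by
    simp only [p1, p2, Ne, Subtype.mk_eq_mk, Prod.mk.injEq]
    exact fun h => hne h.1
  have hsum : ∑ q ∈ ({p1, p2} : Finset _), edgeEnergySummand E c f q
      ≤ ∑' p, edgeEnergySummand E c f p :=
    Summable.sum_le_tsum _ (fun q _ => edgeEnergySummand_nonneg E c hc_pos f q) hf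
  rw [Finset.sum_pair hp12] at hsum
  have h1 : edgeEnergySummand E c f p1 = c a b * ‖f a - f b‖ ^ 2 := rfl
  have h2 : edgeEnergySummand E c f p2 = c a b * ‖f a - f b‖ ^ 2 := by
    simp only [edgeEnergySummand, p2]
    rw [hc_symm b a, norm_sub_rev]
  rw [h1, h2] at hsum
  linarith

theorem stmt_6 {V : Type*} [Countable V] (E : V → V → Prop) (c : V → V → ℝ)
    (hE_symm : ∀ x y, E x y → E y x) (hE_irrefl : ∀ x, ¬ E x x)
    (hlf : ∀ x, {y | E x y}.Finite)
    (hc_symm : ∀ x y, c x y = c y x) (hc_pos : ∀ x y, E x y → 0 < c x y)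
    (hconn : ∀ x y : V, ∃ (n : ℕ) (p : Fin (n + 1) → V), p 0 = x ∧ p (Fin.last n) = y ∧
      ∀ i : Fin n, E (p i.castSucc) (p i.succ))
    (x y : V) :
    ∃ C : ℝ, 0 ≤ C ∧ ∀ f : V → ℂ, Summable (edgeEnergySummand E c f) →
      ‖f x - f y‖ ^ 2 ≤ C * ((1 / 2) * ∑' p, edgeEnergySummand E c f p) := by
  have key : ∀ n (p : Fin (n + 1) → V), (∀ i : Fin n, E (p i.castSucc) (p i.succ)) →
      ∃ C : ℝ, 0 ≤ C ∧ ∀ f : V → ℂ, Summable (edgeEnergySummand E c f) →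
        ‖f (p 0) - f (p (Fin.last n))‖ ^ 2
          ≤ C * ((1 / 2) * ∑' q, edgeEnergySummand E c f q) := by
    intro n
    induction n with
    | zero =>
      intro p _
      refine ⟨0, le_refl 0, fun f _ => ?_⟩
      have : Fin.last 0 = 0 := rfl
      simp [this]
    | succ n ih =>
      intro p hp
      obtain ⟨C1, hC1, h1⟩ := ih (p ∘ Fin.castSucc) (by
        intro i
        have := hp i.castSucc
        simpa only [Function.comp, Fin.succ_castSucc] using this)
      have hedge : E (p (Fin.last n).castSucc) (p (Fin.last (n + 1))) := by
        have := hp (Fin.last n)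
        rwa [Fin.succ_last] at this
      set a := p (Fin.last n).castSucc
      set b := p (Fin.last (n + 1))
      have hcab : 0 < c a b := hc_pos _ _ hedge
      refine ⟨2 * C1 + 2 * (1 / c a b), by positivity, fun f hf => ?_⟩
      set En := (1 / 2) * ∑' q, edgeEnergySummand E c f q with hEn
      have hEn0 : 0 ≤ En :=
        mul_nonneg (by norm_num)
          (tsum_nonneg (edgeEnergySummand_nonneg E c hc_pos f))
      have hA : ‖f (p 0) - f a‖ ^ 2 ≤ C1 * En := by
        have := h1 f hf
        simpa only [Function.comp_apply, Fin.castSucc_zero', ← hEn] using this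
      have hB : ‖f a - f b‖ ^ 2 ≤ (1 / c a b) * En := by
        have h := edge_bound E c hE_symm hE_irrefl hc_symm hc_pos hedge f hf
        rw [← hEn] at h
        rw [div_mul_eq_mul_div, le_div_iff₀ hcab, mul_comm]
        linarith
      have htri : ‖f (p 0) - f b‖ ≤ ‖f (p 0) - f a‖ + ‖f a - f b‖ :=
        norm_sub_le_norm_sub_add_norm_sub _ _ _
      nlinarith [norm_nonneg (f (p 0) - f b), norm_nonneg (f (p 0) - f a),
        norm_nonneg (f a - f b), sq_nonneg (‖f (p 0) - f a‖ - ‖f a - f b‖)]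
  obtain ⟨n, p, hp0, hpl, hpe⟩ := hconn x y
  obtain ⟨C, hC, h⟩ := key n p hpe
  exact ⟨C, hC, fun f hf => by rw [← hp0, ← hpl]; exact h f hf⟩
end
end

section
/- Let X be a set and let K₁, K₂, L₁, L₂ : X × X → ℂ be positive definite kernels with K₁ ≪ L₁ and K₂ ≪ L₂. Then the pointwise products K₁·K₂ and L₁·L₂ (defined by (K₁K₂)(x,y) := K₁(x,y)·K₂(x,y)) are positive definite kernels, and K₁·K₂ ≪ L₁·L₂. -/
open scoped ComplexOrder
open Matrix

noncomputable section

/-- A complex matrix with nonnegative quadratic form is Hermitian. -/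
lemma herm_of_nonneg {N : ℕ} (A : Matrix (Fin N) (Fin N) ℂ)
    (hA : ∀ c : Fin N → ℂ, 0 ≤ star c ⬝ᵥ A *ᵥ c) : A.IsHermitian := by
  rw [Matrix.isHermitian_iff_isSymmetric, LinearMap.isSymmetric_iff_inner_map_self_real]
  intro v
  obtain ⟨c, rfl⟩ := (WithLp.equiv 2 (Fin N → ℂ)).symm.surjective v
  simp only [WithLp.equiv_symm_apply, Matrix.toEuclideanLin_apply_piLp_toLp, EuclideanSpace.inner_toLp_toLp,
    Matrix.toLin'_apply]
  have h := hA c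
  have himre : (star c ⬝ᵥ A *ᵥ c).im = 0 := (((Complex.nonneg_iff).mp h).2).symm
  have : star (A *ᵥ c) ⬝ᵥ c = (starRingEnd ℂ) (star c ⬝ᵥ A *ᵥ c) := by
    simp [dotProduct, map_sum, mul_comm]
  rw [dotProduct_comm, this, Complex.conj_conj]
  exact (Complex.conj_eq_iff_im.mpr himre).symm

lemma pdSum_eq_dot {N : ℕ} (A : Matrix (Fin N) (Fin N) ℂ) (c : Fin N → ℂ) :
    ∑ i, ∑ j, (starRingEnd ℂ) (c i) * c j * A i j = star c ⬝ᵥ A *ᵥ c := by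
  simp only [dotProduct, Matrix.mulVec, dotProduct, Pi.star_apply,
    Finset.mul_sum]
  exact Finset.sum_congr rfl fun i _ => Finset.sum_congr rfl fun j _ => by
    simp [RCLike.star_def]; ring

open scoped MatrixOrder Matrix.Norms.L2Operator in
/-- Schur product theorem (quadratic form version). -/
lemma schur_nonneg {N : ℕ} (A B : Matrix (Fin N) (Fin N) ℂ)
    (hA : ∀ c : Fin N → ℂ, 0 ≤ star c ⬝ᵥ A *ᵥ c)
    (hB : ∀ c : Fin N → ℂ, 0 ≤ star c ⬝ᵥ B *ᵥ c) (c : Fin N → ℂ) :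
    0 ≤ ∑ i, ∑ j, (starRingEnd ℂ) (c i) * c j * (A i j * B i j) := by
  have hAps : A.PosSemidef := Matrix.PosSemidef.of_dotProduct_mulVec_nonneg (herm_of_nonneg A hA) hA
  obtain ⟨P, hP⟩ := CStarAlgebra.nonneg_iff_eq_star_mul_self.mp hAps.nonneg
  have hAentry : ∀ i j, A i j = ∑ k, (starRingEnd ℂ) (P k i) * P k j := by
    intro i j
    rw [hP]
    simp [Matrix.mul_apply, Matrix.conjTranspose_apply, RCLike.star_def]
  have key : ∑ i, ∑ j, (starRingEnd ℂ) (c i) * c j * (A i j * B i j)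
      = ∑ k, ∑ i, ∑ j, (starRingEnd ℂ) (c i * P k i) * (c j * P k j) * B i j := by
    have step1 : ∑ i, ∑ j, (starRingEnd ℂ) (c i) * c j * (A i j * B i j)
        = ∑ i, ∑ k, ∑ j, (starRingEnd ℂ) (c i * P k i) * (c j * P k j) * B i j := by
      refine Finset.sum_congr rfl fun i _ => ?_
      rw [Finset.sum_comm]
      refine Finset.sum_congr rfl fun j _ => ?_
      rw [hAentry i j, Finset.sum_mul, Finset.mul_sum]
      refine Finset.sum_congr rfl fun k _ => ?_
      simp only [_root_.map_mul]
      ring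
    rw [step1, Finset.sum_comm]
  rw [key]
  refine Finset.sum_nonneg fun k _ => ?_
  rw [pdSum_eq_dot B (fun i => c i * P k i)]
  exact hB _

theorem stmt_9 {X : Type*} (K₁ K₂ L₁ L₂ : X → X → ℂ)
    (hK₁ : IsPosDefKernel K₁) (hK₂ : IsPosDefKernel K₂)
    (hL₁ : IsPosDefKernel L₁) (hL₂ : IsPosDefKernel L₂)
    (h₁ : KernelLE K₁ L₁) (h₂ : KernelLE K₂ L₂) :
    IsPosDefKernel (fun x y => K₁ x y * K₂ x y) ∧
    IsPosDefKernel (fun x y => L₁ x y * L₂ x y) ∧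
    KernelLE (fun x y => K₁ x y * K₂ x y) (fun x y => L₁ x y * L₂ x y) := by
  have form : ∀ (K : X → X → ℂ), IsPosDefKernel K → ∀ (N : ℕ) (x : Fin N → X)
      (c : Fin N → ℂ), 0 ≤ star c ⬝ᵥ (Matrix.of fun i j => K (x i) (x j)) *ᵥ c := by
    intro K hK N x c
    rw [← pdSum_eq_dot]
    exact hK N x c
  refine ⟨?_, ?_, ?_⟩
  · intro N x c
    exact schur_nonneg _ _ (form K₁ hK₁ N x) (form K₂ hK₂ N x) c
  · intro N x c
    exact schur_nonneg _ _ (form L₁ hL₁ N x) (form L₂ hL₂ N x) c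
  · intro N x c
    rw [← sub_nonneg]
    have hD₁ : ∀ c' : Fin N → ℂ, 0 ≤ star c' ⬝ᵥ
        ((Matrix.of fun i j => L₁ (x i) (x j)) - Matrix.of fun i j => K₁ (x i) (x j)) *ᵥ c' := by
      intro c'
      rw [Matrix.sub_mulVec, dotProduct_sub]
      rw [← pdSum_eq_dot, ← pdSum_eq_dot, sub_nonneg]
      exact h₁ N x c'
    have hD₂ : ∀ c' : Fin N → ℂ, 0 ≤ star c' ⬝ᵥ
        ((Matrix.of fun i j => L₂ (x i) (x j)) - Matrix.of fun i j => K₂ (x i) (x j)) *ᵥ c' := by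
      intro c'
      rw [Matrix.sub_mulVec, dotProduct_sub]
      rw [← pdSum_eq_dot, ← pdSum_eq_dot, sub_nonneg]
      exact h₂ N x c'
    have e : pdSum (fun x y => L₁ x y * L₂ x y) x c
        - pdSum (fun x y => K₁ x y * K₂ x y) x c
        = (∑ i, ∑ j, (starRingEnd ℂ) (c i) * c j *
            (((Matrix.of fun i j => L₁ (x i) (x j)) - Matrix.of fun i j => K₁ (x i) (x j)) i j
              * (Matrix.of fun i j => L₂ (x i) (x j)) i j))
        + (∑ i, ∑ j, (starRingEnd ℂ) (c i) * c j *
            ((Matrix.of fun i j => K₁ (x i) (x j)) i j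
              * ((Matrix.of fun i j => L₂ (x i) (x j)) - Matrix.of fun i j => K₂ (x i) (x j)) i j)) := by
      simp only [pdSum, Matrix.sub_apply, Matrix.of_apply,
        ← Finset.sum_add_distrib, ← Finset.sum_sub_distrib]
      refine Finset.sum_congr rfl fun i _ => Finset.sum_congr rfl fun j _ => ?_
      ring
    rw [e]
    have t1 := schur_nonneg _ _ hD₁ (form L₂ hL₂ N x) c
    have t2 := schur_nonneg _ _ (form K₁ hK₁ N x) hD₂ c
    exact add_nonneg t1 t2
end
end

section
/- Let X be a set, K : X × X → ℂ a positive definite kernel with reproducing kernel Hilbert space H(K), and let (φ_n)_{n∈ℕ} ⊂ H(K) be a Parseval frame for H(K). Then for all x, y ∈ X, K(x,y) = Σ_{n∈ℕ} φ_n(x)·conj(φ_n(y)), the series being (unconditionally) summable. -/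
open scoped ComplexInnerProductSpace ComplexOrder

noncomputable section

theorem stmt_12 {X : Type*} (K : X → X → ℂ) (hK : IsPosDefKernel K)
    {H : Type*} [NormedAddCommGroup H] [InnerProductSpace ℂ H] [CompleteSpace H]
    (ι : H →ₗ[ℂ] (X → ℂ)) (hι : Function.Injective ι)
    (kH : X → H) (hkH : ∀ x, ι (kH x) = fun y => K y x)
    (hrep : ∀ (g : H) (x : X), ι g x = ⟪kH x, g⟫)
    (φ : ℕ → H)
    (hframe : ∀ f : H, HasSum (fun n => ‖⟪φ n, f⟫‖ ^ 2) (‖f‖ ^ 2)) :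
    ∀ x y : X, HasSum (fun n => ι (φ n) x * (starRingEnd ℂ) (ι (φ n) y)) (K x y) := by
  classical
  have hmem : ∀ f : H, Memℓp (fun n => ⟪φ n, f⟫) (2 : ENNReal) := by
    intro f
    apply memℓp_gen
    have h := (hframe f).summable
    have : ((2 : ENNReal).toReal) = (2 : ℝ) := by norm_num
    rw [this]
    convert h using 2 with n
    rw [show ((2:ℝ)) = ((2:ℕ):ℝ) by norm_num, Real.rpow_natCast]
  let T : H →ₗᵢ[ℂ] lp (fun _ : ℕ => ℂ) 2 :=
    { toFun := fun f => ⟨fun n => ⟪φ n, f⟫, hmem f⟩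
      map_add' := by intro f g; ext n; simp [inner_add_right]; rfl
      map_smul' := by intro c f; ext n; simp [inner_smul_right]
      norm_map' := by
        intro f
        have h1 : ‖(⟨fun n => ⟪φ n, f⟫, hmem f⟩ : lp (fun _ : ℕ => ℂ) 2)‖
            = (∑' n, ‖⟪φ n, f⟫‖ ^ ((2 : ENNReal).toReal)) ^ (1 / (2 : ENNReal).toReal) :=
          lp.norm_eq_tsum_rpow (by norm_num) _
        have h2 : ((2 : ENNReal).toReal) = (2 : ℝ) := by norm_num
        show ‖(⟨fun n => ⟪φ n, f⟫, hmem f⟩ : lp (fun _ : ℕ => ℂ) 2)‖ = ‖f‖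
        rw [h1, h2]
        have h3 : (∑' n, ‖⟪φ n, f⟫‖ ^ (2 : ℝ)) = ‖f‖ ^ (2 : ℝ) := by
          have := (hframe f).tsum_eq
          rw [show ((2:ℝ)) = ((2:ℕ):ℝ) by norm_num]
          simp only [Real.rpow_natCast]
          exact this
        rw [h3, ← Real.rpow_mul (norm_nonneg f)]
        norm_num }
  intro x y
  have hTapp : ∀ (f : H) (n : ℕ), (T f : ℕ → ℂ) n = ⟪φ n, f⟫ := fun f n => rfl
  have hs := lp.hasSum_inner (𝕜 := ℂ) (T (kH x)) (T (kH y))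
  have hinner : ⟪T (kH x), T (kH y)⟫ = ⟪kH x, kH y⟫ := T.inner_map_map _ _
  rw [hinner] at hs
  have hKxy : K x y = ⟪kH x, kH y⟫ := by
    have := congrFun (hkH y) x
    rw [← this, hrep]
  rw [hKxy]
  have heq : (fun n => ι (φ n) x * (starRingEnd ℂ) (ι (φ n) y))
      = fun n => ⟪(T (kH x) : ℕ → ℂ) n, (T (kH y) : ℕ → ℂ) n⟫ := by
    funext n
    rw [hTapp, hTapp, hrep, hrep]
    simp only [RCLike.inner_apply]
    rw [← inner_conj_symm (kH x) (φ n), ← inner_conj_symm (φ n) (kH y)]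
    ring
  rw [heq]
  exact hs
end
end

section
/- Let X be a set and K, L : X × X → ℂ positive definite kernels with K ≪ L, with reproducing kernel Hilbert spaces H(K) and H(L) respectively, and suppose H(K) is separable and H(L) equals the closed linear span of {L(·,x) : x ∈ X}. Then there exists a bounded linear operator T : H(L) → ℓ²(ℕ) with ‖T‖ ≤ 1 such that ⟨T(L(·,x)), T(L(·,y))⟩_{ℓ²} = K(x,y) for all x, y ∈ X; equivalently, (T*T L(·,y))(x) = K(x,y) for all x, y ∈ X. -/
open scoped ComplexInnerProductSpace ComplexOrder

noncomputable section

/-- Expansion of the inner product of a finite linear combination of kernel functions. -/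
lemma aux_inner_sum {X : Type*} {H : Type*} [NormedAddCommGroup H] [InnerProductSpace ℂ H]
    (M : X → X → ℂ) (k : X → H) (hk : ∀ a b, ⟪k a, k b⟫ = M a b) (s : Finset X) (f : X → ℂ) :
    ⟪∑ a ∈ s, f a • k a, ∑ b ∈ s, f b • k b⟫
      = ∑ a ∈ s, ∑ b ∈ s, (starRingEnd ℂ) (f a) * f b * M a b := by
  rw [sum_inner]
  refine Finset.sum_congr rfl fun a _ => ?_
  rw [inner_sum]
  refine Finset.sum_congr rfl fun b _ => ?_
  rw [inner_smul_left, inner_smul_right, hk]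
  ring

/-- `pdSum` along an enumeration of a finite set equals the double `Finset` sum. -/
lemma aux_pdSum_finset {X : Type*} (M : X → X → ℂ) (s : Finset X) (f : X → ℂ) :
    pdSum M (fun i => ((s.equivFin.symm i : s) : X)) (fun i => f ((s.equivFin.symm i : s) : X))
      = ∑ a ∈ s, ∑ b ∈ s, (starRingEnd ℂ) (f a) * f b * M a b := by
  classical
  rw [← Finset.sum_coe_sort s (fun a => ∑ b ∈ s, (starRingEnd ℂ) (f a) * f b * M a b)]
  unfold pdSum
  refine Fintype.sum_equiv s.equivFin.symm _ _ fun i => ?_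
  rw [← Finset.sum_coe_sort s
    (fun b => (starRingEnd ℂ) (f ((s.equivFin.symm i : s) : X)) * f b
      * M ((s.equivFin.symm i : s) : X) b)]
  exact Fintype.sum_equiv s.equivFin.symm _ _ fun j => rfl

/-- Key contraction estimate coming from `K ≪ L`. -/
lemma aux_norm_lc_le {X HK HL : Type*} [NormedAddCommGroup HK] [InnerProductSpace ℂ HK]
    [NormedAddCommGroup HL] [InnerProductSpace ℂ HL]
    {K L : X → X → ℂ} (hord : KernelLE K L) {kK : X → HK} {kL : X → HL}
    (hK : ∀ a b, ⟪kK a, kK b⟫ = K a b) (hL : ∀ a b, ⟪kL a, kL b⟫ = L a b)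
    (s : Finset X) (f : X → ℂ) :
    ‖∑ a ∈ s, f a • kK a‖ ≤ ‖∑ a ∈ s, f a • kL a‖ := by
  set vK := ∑ a ∈ s, f a • kK a
  set vL := ∑ a ∈ s, f a • kL a
  have hle : ⟪vK, vK⟫ ≤ ⟪vL, vL⟫ := by
    rw [aux_inner_sum K kK hK s f, aux_inner_sum L kL hL s f,
      ← aux_pdSum_finset K s f, ← aux_pdSum_finset L s f]
    exact hord _ _ _
  have h4 : ‖vK‖ ^ 2 ≤ ‖vL‖ ^ 2 := by
    rw [← inner_self_eq_norm_sq (𝕜 := ℂ) vK, ← inner_self_eq_norm_sq (𝕜 := ℂ) vL]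
    exact (Complex.le_def.mp hle).1
  have := Real.sqrt_le_sqrt h4
  rwa [Real.sqrt_sq (norm_nonneg _), Real.sqrt_sq (norm_nonneg _)] at this

/-- An orthonormal family in a separable space has countable index type. -/
lemma aux_orthonormal_countable {H : Type*} [NormedAddCommGroup H] [InnerProductSpace ℂ H]
    [TopologicalSpace.SeparableSpace H] {ι : Type*} {v : ι → H} (hv : Orthonormal ℂ v) :
    Countable ι := by
  apply Pairwise.countable_of_isOpen_disjoint (s := fun i : ι => Metric.ball (v i) (1 / 2))
  · intro i j hij
    have hnorm : ‖v i - v j‖ ^ 2 = 2 := by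
      rw [norm_sub_sq (𝕜 := ℂ), hv.1 i, hv.1 j, hv.2 hij]
      norm_num
    have hdist : 1 ≤ dist (v i) (v j) := by
      rw [dist_eq_norm]
      nlinarith [norm_nonneg (v i - v j)]
    exact Metric.ball_disjoint_ball (by linarith)
  · intro i; exact Metric.isOpen_ball
  · intro i; exact Metric.nonempty_ball.mpr (by norm_num)

/-- A separable Hilbert space embeds isometrically into `ℓ²(ℕ)`. -/
lemma aux_exists_isometry (H : Type*) [NormedAddCommGroup H] [InnerProductSpace ℂ H]
    [CompleteSpace H] [TopologicalSpace.SeparableSpace H] :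
    Nonempty (H →ₗᵢ[ℂ] lp (fun _ : ℕ => ℂ) 2) := by
  classical
  obtain ⟨w, b, hb⟩ := exists_hilbertBasis ℂ H
  have hw_on : Orthonormal ℂ ((↑) : w → H) := by rw [← hb]; exact b.orthonormal
  have hcount : Countable ↥w := aux_orthonormal_countable hw_on
  obtain ⟨g, hg⟩ := Countable.exists_injective_nat ↥w
  set v : ↥w → lp (fun _ : ℕ => ℂ) 2 := fun i => lp.single 2 (g i) (1 : ℂ) with hv
  have hvon : Orthonormal ℂ v := by
    rw [orthonormal_iff_ite]
    intro i j
    rw [hv, lp.inner_single_left]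
    by_cases h : i = j
    · subst h
      simp [lp.single_apply_self, RCLike.inner_apply]
    · rw [lp.single_apply_ne _ _ _ (fun hgij => h (hg hgij)), if_neg h, RCLike.inner_apply]
      simp
  exact ⟨hvon.orthogonalFamily.linearIsometry.comp b.repr.toLinearIsometry⟩

theorem stmt_13 {X : Type*} (K L : X → X → ℂ)
    (hKpd : IsPosDefKernel K) (hLpd : IsPosDefKernel L) (hord : KernelLE K L)
    {HK : Type*} [NormedAddCommGroup HK] [InnerProductSpace ℂ HK] [CompleteSpace HK]
    [TopologicalSpace.SeparableSpace HK]
    (ιK : HK →ₗ[ℂ] (X → ℂ)) (hιK : Function.Injective ιK)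
    (kK : X → HK) (hkK : ∀ x, ιK (kK x) = fun y => K y x)
    (hrepK : ∀ (g : HK) (x : X), ιK g x = ⟪kK x, g⟫)
    {HL : Type*} [NormedAddCommGroup HL] [InnerProductSpace ℂ HL] [CompleteSpace HL]
    (ιL : HL →ₗ[ℂ] (X → ℂ)) (hιL : Function.Injective ιL)
    (kL : X → HL) (hkL : ∀ x, ιL (kL x) = fun y => L y x)
    (hrepL : ∀ (g : HL) (x : X), ιL g x = ⟪kL x, g⟫)
    (hdense : (Submodule.span ℂ (Set.range kL)).topologicalClosure = ⊤) :
    ∃ T : HL →L[ℂ] lp (fun _ : ℕ => ℂ) 2,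
      ‖T‖ ≤ 1 ∧
      (∀ x y, ⟪T (kL x), T (kL y)⟫ = K x y) ∧
      (∀ x y, ιL ((ContinuousLinearMap.adjoint T) (T (kL y))) x = K x y) := by
  classical
  -- inner products of kernel functions
  have hKinner : ∀ a b, ⟪kK a, kK b⟫ = K a b := fun a b => by
    rw [← hrepK (kK b) a, hkK b]
  have hLinner : ∀ a b, ⟪kL a, kL b⟫ = L a b := fun a b => by
    rw [← hrepL (kL b) a, hkL b]
  -- linear combination maps
  set FK : (X →₀ ℂ) →ₗ[ℂ] HK := Finsupp.linearCombination ℂ kK with hFK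
  set FL : (X →₀ ℂ) →ₗ[ℂ] HL := Finsupp.linearCombination ℂ kL with hFL
  have keyF : ∀ c : X →₀ ℂ, ‖FK c‖ ≤ ‖FL c‖ := by
    intro c
    have h := aux_norm_lc_le hord hKinner hLinner c.support c
    simpa [hFK, hFL, Finsupp.linearCombination_apply, Finsupp.sum] using h
  have hker : LinearMap.ker FL ≤ LinearMap.ker FK := by
    intro c hc
    rw [LinearMap.mem_ker] at hc ⊢
    have := keyF c
    rw [hc, norm_zero] at this
    exact norm_le_zero_iff.mp this
  -- the contraction on the range of FL
  set p : Submodule ℂ HL := LinearMap.range FL with hp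
  set S₀ : ↥p →ₗ[ℂ] HK :=
    ((LinearMap.ker FL).liftQ FK hker).comp FL.quotKerEquivRange.symm.toLinearMap with hS₀def
  have hS₀ : ∀ c : X →₀ ℂ, S₀ ⟨FL c, LinearMap.mem_range_self FL c⟩ = FK c := by
    intro c
    have h1 : FL.quotKerEquivRange.symm ⟨FL c, LinearMap.mem_range_self FL c⟩
        = (LinearMap.ker FL).mkQ c :=
      LinearMap.quotKerEquivRange_symm_apply_image FL c (LinearMap.mem_range_self FL c)
    show ((LinearMap.ker FL).liftQ FK hker) (FL.quotKerEquivRange.symm ⟨FL c, _⟩) = FK c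
    rw [h1, Submodule.mkQ_apply, Submodule.liftQ_apply]
  have hS₀bound : ∀ v : ↥p, ‖S₀ v‖ ≤ 1 * ‖v‖ := by
    rintro ⟨v, hv⟩
    obtain ⟨c, rfl⟩ := hv
    rw [one_mul, hS₀ c]
    exact keyF c
  set Scont : ↥p →L[ℂ] HK := LinearMap.mkContinuous S₀ 1 hS₀bound with hScont
  have hScontnorm : ‖Scont‖ ≤ 1 := LinearMap.mkContinuous_norm_le S₀ zero_le_one hS₀bound
  -- density
  have hptop : p.topologicalClosure = ⊤ := by
    rw [hp, hFL, Finsupp.range_linearCombination]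
    exact hdense
  have hdr : DenseRange (⇑p.subtypeL) := by
    have hd : Dense (p : Set HL) := Submodule.dense_iff_topologicalClosure_eq_top.mpr hptop
    have : Set.range (⇑p.subtypeL) = (p : Set HL) := Subtype.range_coe
    rw [DenseRange, this]
    exact hd
  have h_e : ∀ v : ↥p, ‖v‖ ≤ ((1 : NNReal) : ℝ) * ‖p.subtypeL v‖ := by
    intro v
    simp
  set Sext : HL →L[ℂ] HK :=
    Scont.extend p.subtypeL
    with hSext
  have hSextnorm : ‖Sext‖ ≤ 1 := by
    have := Scont.opNorm_extend_le hdr h_e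
    calc ‖Sext‖ ≤ ((1 : NNReal) : ℝ) * ‖Scont‖ := this
      _ ≤ 1 := by simpa using hScontnorm
  have hSkL : ∀ x, Sext (kL x) = kK x := by
    intro x
    have h1 : FL (Finsupp.single x 1) = kL x := by
      rw [hFL, Finsupp.linearCombination_single, one_smul]
    have h2 : kL x = p.subtypeL ⟨FL (Finsupp.single x 1),
        LinearMap.mem_range_self FL (Finsupp.single x 1)⟩ := by
      simp [h1]
    rw [h2, hSext, ContinuousLinearMap.extend_eq _ hdr
      (ContinuousLinearMap.isUniformEmbedding_of_bound _ h_e).isUniformInducing]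
    show S₀ _ = _
    rw [hS₀, hFK, Finsupp.linearCombination_single, one_smul]
  -- embed HK isometrically into ℓ²(ℕ)
  obtain ⟨Φ⟩ := aux_exists_isometry HK
  set T : HL →L[ℂ] lp (fun _ : ℕ => ℂ) 2 := Φ.toContinuousLinearMap.comp Sext with hT
  have hTapp : ∀ f, T f = Φ (Sext f) := fun f => rfl
  have hTinner : ∀ x y, ⟪T (kL x), T (kL y)⟫ = K x y := by
    intro x y
    rw [hTapp, hTapp, Φ.inner_map_map, hSkL, hSkL, hKinner]
  refine ⟨T, ?_, hTinner, ?_⟩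
  · refine ContinuousLinearMap.opNorm_le_bound _ zero_le_one fun f => ?_
    rw [one_mul, hTapp, Φ.norm_map]
    calc ‖Sext f‖ ≤ ‖Sext‖ * ‖f‖ := Sext.le_opNorm f
      _ ≤ 1 * ‖f‖ := by gcongr
      _ = ‖f‖ := one_mul _
  · intro x y
    rw [hrepL, ContinuousLinearMap.adjoint_inner_right, hTinner]
end
end

section
/- Fix k ∈ ℕ, k ≥ 1, and let μ be the unitarily invariant Borel probability measure on the unit sphere ∂B_k of ℂ^k. Then for every z ∈ ℂ^k with ‖z‖ < 1, ∫_{∂B_k} |1 − ⟨z,b⟩|^{-2} dμ(b) ≤ 1/(1 − ‖z‖²); in particular the function b ↦ (1 − ⟨z,b⟩)^{-1} belongs to L²(∂B_k, μ). -/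
open MeasureTheory
open scoped ComplexInnerProductSpace

noncomputable section

theorem stmt_14 (k : ℕ) (hk : 1 ≤ k)
    [MeasurableSpace (EuclideanSpace ℂ (Fin k))] [BorelSpace (EuclideanSpace ℂ (Fin k))]
    (μ : Measure (EuclideanSpace ℂ (Fin k))) [IsProbabilityMeasure μ]
    (hsupp : μ {b : EuclideanSpace ℂ (Fin k) | ‖b‖ = 1}ᶜ = 0)
    (hinv : ∀ U : EuclideanSpace ℂ (Fin k) ≃ₗᵢ[ℂ] EuclideanSpace ℂ (Fin k),
      μ.map U = μ) :
    ∀ z : EuclideanSpace ℂ (Fin k), ‖z‖ < 1 →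
      (∫ b, ‖(1 - ⟪z, b⟫)⁻¹‖ ^ 2 ∂μ) ≤ 1 / (1 - ‖z‖ ^ 2) ∧
      MemLp (fun b => (1 - ⟪z, b⟫)⁻¹) 2 μ := by
  intro z hz
  set w : EuclideanSpace ℂ (Fin k) → ℂ := fun b => ⟪z, b⟫ with hw_def
  have hz0 : (0:ℝ) ≤ ‖z‖ := norm_nonneg z
  have hz1 : (0:ℝ) < 1 - ‖z‖ := by linarith
  have hz2 : ‖z‖ ^ 2 < 1 := by nlinarith
  have hz2' : (0:ℝ) < 1 - ‖z‖ ^ 2 := by linarith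
  have hmw : Measurable w := measurable_const.inner measurable_id
  have hb1 : ∀ᵐ b ∂μ, ‖b‖ = 1 := by
    rw [MeasureTheory.ae_iff]
    exact hsupp
  have hwz : ∀ᵐ b ∂μ, ‖w b‖ ≤ ‖z‖ := by
    filter_upwards [hb1] with b hb
    calc ‖w b‖ ≤ ‖z‖ * ‖b‖ := norm_inner_le_norm z b
    _ = ‖z‖ := by rw [hb, mul_one]
  -- integrability of monomials
  have hgmeas : ∀ m n : ℕ, Measurable
      (fun b => (starRingEnd ℂ) (w b) ^ m * (w b) ^ n) := by
    intro m n
    exact (((Complex.continuous_conj.measurable.comp hmw).pow_const m).mul (hmw.pow_const n))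
  have hgint : ∀ m n : ℕ, Integrable
      (fun b => (starRingEnd ℂ) (w b) ^ m * (w b) ^ n) μ := by
    intro m n
    refine Integrable.mono' (integrable_const (1:ℝ)) (hgmeas m n).aestronglyMeasurable ?_
    filter_upwards [hwz] with b hb
    have h1 : ‖w b‖ ≤ 1 := hb.trans hz.le
    have h0 : (0:ℝ) ≤ ‖w b‖ := norm_nonneg _
    rw [norm_mul, norm_pow, norm_pow, RCLike.norm_conj]
    calc ‖w b‖ ^ m * ‖w b‖ ^ n ≤ 1 * 1 :=
      mul_le_mul (pow_le_one₀ h0 h1) (pow_le_one₀ h0 h1) (pow_nonneg h0 n) zero_le_one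
    _ = 1 := by ring
  -- orthogonality of distinct monomials
  have horth : ∀ m n : ℕ, m ≠ n →
      ∫ b, (starRingEnd ℂ) (w b) ^ m * (w b) ^ n ∂μ = 0 := by
    intro m n hmn
    have hd : ((n:ℝ) - m) ≠ 0 := sub_ne_zero.mpr (by exact_mod_cast hmn.symm)
    set θ : ℝ := Real.pi / ((n:ℝ) - m) with hθ
    set c : ℂ := Complex.exp (θ * Complex.I) with hc
    have hc0 : c ≠ 0 := Complex.exp_ne_zero _
    have hcnorm : ∀ x : EuclideanSpace ℂ (Fin k), ‖c • x‖ = ‖x‖ := by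
      intro x
      rw [norm_smul, hc, Complex.norm_exp_ofReal_mul_I, one_mul]
    set U : EuclideanSpace ℂ (Fin k) ≃ₗᵢ[ℂ] EuclideanSpace ℂ (Fin k) :=
      ⟨LinearEquiv.smulOfNeZero ℂ _ c hc0, hcnorm⟩ with hU
    have hUapp : ∀ b : EuclideanSpace ℂ (Fin k), U b = c • b := fun b => rfl
    have hkey : (starRingEnd ℂ) c ^ m * c ^ n = -1 := by
      have hconj : (starRingEnd ℂ) c = Complex.exp (-(θ:ℂ) * Complex.I) := by
        rw [hc, ← Complex.exp_conj]
        congr 1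
        simp [Complex.conj_I]
      have hπ : ((n:ℝ) - (m:ℝ)) * θ = Real.pi := by
        rw [hθ]
        field_simp
      rw [hconj, hc, ← Complex.exp_nat_mul, ← Complex.exp_nat_mul, ← Complex.exp_add]
      have harg : (m:ℂ) * (-(θ:ℂ) * Complex.I) + (n:ℂ) * ((θ:ℂ) * Complex.I)
          = (((n:ℝ) - (m:ℝ)) * θ : ℝ) * Complex.I := by
        push_cast
        ring
      rw [harg, hπ, Complex.exp_pi_mul_I]
    have h1 : ∫ b, (starRingEnd ℂ) (w b) ^ m * (w b) ^ n ∂μ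
        = ∫ b, (starRingEnd ℂ) (w (U b)) ^ m * (w (U b)) ^ n ∂μ := by
      conv_lhs => rw [← hinv U]
      exact integral_map U.continuous.measurable.aemeasurable
        (hgmeas m n).aestronglyMeasurable
    have h2 : ∀ b : EuclideanSpace ℂ (Fin k),
        (starRingEnd ℂ) (w (U b)) ^ m * (w (U b)) ^ n
        = -((starRingEnd ℂ) (w b) ^ m * (w b) ^ n) := by
      intro b
      have hwU : w (U b) = c * w b := by
        rw [hUapp, hw_def]
        exact inner_smul_right z b c
      rw [hwU, map_mul, mul_pow, mul_pow]
      have hre : (starRingEnd ℂ) c ^ m * (starRingEnd ℂ) (w b) ^ m * (c ^ n * (w b) ^ n)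
          = ((starRingEnd ℂ) c ^ m * c ^ n) * ((starRingEnd ℂ) (w b) ^ m * (w b) ^ n) := by
        ring
      rw [hre, hkey]
      ring
    simp_rw [h2, integral_neg] at h1
    linear_combination h1 / 2
  -- diagonal bound
  have hdiag : ∀ n : ℕ,
      (∫ b, (starRingEnd ℂ) (w b) ^ n * (w b) ^ n ∂μ).re ≤ (‖z‖ ^ 2) ^ n := by
    intro n
    have hb : ‖∫ b, (starRingEnd ℂ) (w b) ^ n * (w b) ^ n ∂μ‖ ≤ (‖z‖ ^ 2) ^ n := by
      have hcst : (∫ (_ : EuclideanSpace ℂ (Fin k)), ((‖z‖:ℝ) ^ 2) ^ n ∂μ) = (‖z‖ ^ 2) ^ n := by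
        simp [measure_univ]
      rw [← hcst]
      refine norm_integral_le_of_norm_le (integrable_const _) ?_
      filter_upwards [hwz] with b hb
      rw [norm_mul, norm_pow, norm_pow, RCLike.norm_conj, ← mul_pow]
      have h0 : (0:ℝ) ≤ ‖w b‖ := norm_nonneg _
      calc (‖w b‖ * ‖w b‖) ^ n ≤ (‖z‖ * ‖z‖) ^ n :=
            pow_le_pow_left₀ (mul_nonneg h0 h0) (mul_le_mul hb hb h0 hz0) n
      _ = (‖z‖ ^ 2) ^ n := by ring_nf
    calc (∫ b, (starRingEnd ℂ) (w b) ^ n * (w b) ^ n ∂μ).re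
        ≤ ‖∫ b, (starRingEnd ℂ) (w b) ^ n * (w b) ^ n ∂μ‖ := by
          exact Complex.re_le_norm _
    _ ≤ (‖z‖ ^ 2) ^ n := hb
  -- partial sums
  set S : ℕ → EuclideanSpace ℂ (Fin k) → ℂ :=
    fun N b => ∑ i ∈ Finset.range N, (w b) ^ i with hS
  have hSmeas : ∀ N, Measurable (S N) := by
    intro N
    exact Finset.measurable_sum _ (fun i _ => hmw.pow_const i)
  have geom_bound : ∀ N, ∑ i ∈ Finset.range N, ‖z‖ ^ i ≤ (1 - ‖z‖)⁻¹ := by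
    intro N
    calc ∑ i ∈ Finset.range N, ‖z‖ ^ i ≤ ∑' i : ℕ, ‖z‖ ^ i :=
          Summable.sum_le_tsum _ (fun i _ => pow_nonneg hz0 i) (summable_geometric_of_lt_one hz0 hz)
    _ = (1 - ‖z‖)⁻¹ := tsum_geometric_of_lt_one hz0 hz
  have hSbound : ∀ N, ∀ᵐ b ∂μ, ‖S N b‖ ≤ (1 - ‖z‖)⁻¹ := by
    intro N
    filter_upwards [hwz] with b hb
    calc ‖S N b‖ ≤ ∑ i ∈ Finset.range N, ‖(w b) ^ i‖ := norm_sum_le _ _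
    _ ≤ ∑ i ∈ Finset.range N, ‖z‖ ^ i := by
        refine Finset.sum_le_sum fun i _ => ?_
        rw [norm_pow]
        exact pow_le_pow_left₀ (norm_nonneg _) hb i
    _ ≤ (1 - ‖z‖)⁻¹ := geom_bound N
  -- the key estimate for partial sums
  have key : ∀ N, ∫ b, ‖S N b‖ ^ 2 ∂μ ≤ 1 / (1 - ‖z‖ ^ 2) := by
    intro N
    have h3 : ∫ b, ((starRingEnd ℂ) (S N b)) * S N b ∂μ
        = ((∫ b, ‖S N b‖ ^ 2 ∂μ : ℝ) : ℂ) := by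
      calc ∫ b, ((starRingEnd ℂ) (S N b)) * S N b ∂μ
          = ∫ b, ((‖S N b‖ ^ 2 : ℝ) : ℂ) ∂μ := by
            congr 1
            funext b
            rw [← Complex.normSq_eq_conj_mul_self]
            congr 1
            rw [Complex.sq_norm]
      _ = ((∫ b, ‖S N b‖ ^ 2 ∂μ : ℝ) : ℂ) := integral_ofReal
    have h4 : ∫ b, ((starRingEnd ℂ) (S N b)) * S N b ∂μ
        = ∑ n ∈ Finset.range N, ∫ b, (starRingEnd ℂ) (w b) ^ n * (w b) ^ n ∂μ := by
      have hexp : ∀ b, ((starRingEnd ℂ) (S N b)) * S N b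
          = ∑ m ∈ Finset.range N, ∑ n ∈ Finset.range N,
              (starRingEnd ℂ) (w b) ^ m * (w b) ^ n := by
        intro b
        rw [hS]
        simp only [map_sum, map_pow]
        rw [Finset.sum_mul_sum]
      simp_rw [hexp]
      rw [integral_finset_sum _ (fun m _ => integrable_finset_sum _ (fun n _ => hgint m n))]
      have hsingle : ∀ m ∈ Finset.range N,
          (∫ b, ∑ n ∈ Finset.range N, (starRingEnd ℂ) (w b) ^ m * (w b) ^ n ∂μ)
          = ∫ b, (starRingEnd ℂ) (w b) ^ m * (w b) ^ m ∂μ := by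
        intro m hm
        rw [integral_finset_sum _ (fun n _ => hgint m n)]
        exact Finset.sum_eq_single_of_mem m hm (fun n _ hne => horth m n (Ne.symm hne))
      exact Finset.sum_congr rfl hsingle
    have h5 : ∫ b, ‖S N b‖ ^ 2 ∂μ
        = ∑ n ∈ Finset.range N,
            (∫ b, (starRingEnd ℂ) (w b) ^ n * (w b) ^ n ∂μ).re := by
      have hre := congrArg Complex.re (h3.symm.trans h4)
      rw [Complex.ofReal_re, Complex.re_sum] at hre
      exact hre
    rw [h5]
    calc ∑ n ∈ Finset.range N, (∫ b, (starRingEnd ℂ) (w b) ^ n * (w b) ^ n ∂μ).re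
        ≤ ∑ n ∈ Finset.range N, (‖z‖ ^ 2) ^ n := Finset.sum_le_sum (fun n _ => hdiag n)
    _ ≤ ∑' n : ℕ, (‖z‖ ^ 2) ^ n :=
        Summable.sum_le_tsum _ (fun i _ => pow_nonneg (sq_nonneg _) i)
          (summable_geometric_of_lt_one (sq_nonneg _) hz2)
    _ = (1 - ‖z‖ ^ 2)⁻¹ := tsum_geometric_of_lt_one (sq_nonneg _) hz2
    _ = 1 / (1 - ‖z‖ ^ 2) := (one_div _).symm
  -- measurability and boundedness of the limit function
  have hf_meas : Measurable (fun b => (1 - w b)⁻¹) := (measurable_const.sub hmw).inv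
  have hbound1 : ∀ᵐ b ∂μ, ‖(1 - w b)⁻¹‖ ≤ (1 - ‖z‖)⁻¹ := by
    filter_upwards [hwz] with b hb
    have h1 : 1 - ‖z‖ ≤ ‖1 - w b‖ := by
      calc 1 - ‖z‖ ≤ 1 - ‖w b‖ := by linarith
      _ ≤ ‖(1:ℂ)‖ - ‖w b‖ := by rw [norm_one]
      _ ≤ ‖1 - w b‖ := norm_sub_norm_le _ _
    rw [norm_inv]
    exact inv_anti₀ hz1 h1
  -- a.e. convergence
  have hlim : ∀ᵐ b ∂μ, Filter.Tendsto (fun N => ‖S N b‖ ^ 2) Filter.atTop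
      (nhds (‖(1 - w b)⁻¹‖ ^ 2)) := by
    filter_upwards [hwz] with b hb
    have hw1 : ‖w b‖ < 1 := lt_of_le_of_lt hb hz
    have h5 : Filter.Tendsto (fun N => S N b) Filter.atTop (nhds ((1 - w b)⁻¹)) :=
      (hasSum_geometric_of_norm_lt_one hw1).tendsto_sum_nat
    exact (h5.norm).pow 2
  -- dominated convergence
  have hmain : Filter.Tendsto (fun N => ∫ b, ‖S N b‖ ^ 2 ∂μ) Filter.atTop
      (nhds (∫ b, ‖(1 - w b)⁻¹‖ ^ 2 ∂μ)) := by
    refine tendsto_integral_of_dominated_convergence (fun _ => ((1 - ‖z‖)⁻¹) ^ 2)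
      (fun N => ((hSmeas N).norm.pow_const 2).aestronglyMeasurable)
      (integrable_const _) ?_ hlim
    intro N
    filter_upwards [hSbound N] with b hb
    rw [Real.norm_eq_abs, abs_of_nonneg (by positivity)]
    exact pow_le_pow_left₀ (norm_nonneg _) hb 2
  constructor
  · exact le_of_tendsto hmain (Filter.Eventually.of_forall key)
  · exact MemLp.of_bound hf_meas.aestronglyMeasurable ((1 - ‖z‖)⁻¹) hbound1
end
end
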